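/- With hypersurface data (h, l, l2) and inverse data (P, n, n2) satisfying the four compatibility relations, suppose the data is transformed by a rigging transformation with gauge parameters λ ≠ 0 and a vector v ∈ V, i.e. h' = h, l' = λ·(l + h(v,·)), l2' = λ²·(l2 + 2 l(v) + h(v,v)). Then the transformed inverse data n2' = n2/λ², n' = (1/λ)(n − n2·v), and P'(ω,χ) = P(ω,χ) + n2·ω(v)·χ(v) − ω(v)·χ(n) − χ(v)·ω(n) satisfy the same four compatibility relations with respect to (h', l', l2'). -/

import Mathlib

/-- The transformed inverse data (n2', n', P') of a rigging transformation
l' = λ(l + h(v,·)) satisfies the four hypersurface-data compatibility relations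
with respect to the transformed data (h' = h, l', l2'). -/
theorem stmt_2
    (V : Type*) [AddCommGroup V] [Module ℝ V] [FiniteDimensional ℝ V]
    (h : V →ₗ[ℝ] V →ₗ[ℝ] ℝ) (hsymm : ∀ X Y : V, h X Y = h Y X)
    (l : Module.Dual ℝ V) (l2 : ℝ)
    (P : Module.Dual ℝ V →ₗ[ℝ] Module.Dual ℝ V →ₗ[ℝ] ℝ)
    (Psymm : ∀ ω χ : Module.Dual ℝ V, P ω χ = P χ ω)
    (n : V) (n2 : ℝ)
    (c1 : ∀ (ω : Module.Dual ℝ V) (X : V), P ω (h X) + ω n * l X = ω X)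
    (c2 : ∀ ω : Module.Dual ℝ V, P ω l + l2 * ω n = 0)
    (c3 : l n + n2 * l2 = 1)
    (c4 : ∀ X : V, h n X + n2 * l X = 0)
    (lam : ℝ) (hlam : lam ≠ 0) (v : V) :
    let l' : Module.Dual ℝ V := lam • (l + h v)
    let l2' : ℝ := lam ^ 2 * (l2 + 2 * l v + h v v)
    let n' : V := lam⁻¹ • (n - n2 • v)
    let n2' : ℝ := n2 / lam ^ 2
    let P' : Module.Dual ℝ V → Module.Dual ℝ V → ℝ := fun ω χ =>
      P ω χ + n2 * ω v * χ v - ω v * χ n - χ v * ω n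
    (∀ (ω : Module.Dual ℝ V) (X : V), P' ω (h X) + ω n' * l' X = ω X) ∧
    (∀ ω : Module.Dual ℝ V, P' ω l' + l2' * ω n' = 0) ∧
    (l' n' + n2' * l2' = 1) ∧
    (∀ X : V, h n' X + n2' * l' X = 0) := by
  intro l' l2' n' n2' P'
  have h1 : ∀ (ω : Module.Dual ℝ V) (X : V), P ω (h X) = ω X - ω n * l X := by
    intro ω X; linarith [c1 ω X]
  have h2 : ∀ ω : Module.Dual ℝ V, P ω l = -(l2 * ω n) := by
    intro ω; linarith [c2 ω]
  have h4 : ∀ X : V, h n X = -(n2 * l X) := by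
    intro X; linarith [c4 X]
  refine ⟨?_, ?_, ?_, ?_⟩
  · intro ω X
    simp only [P', l', n', map_add, map_sub, map_smul, LinearMap.add_apply,
      LinearMap.sub_apply, LinearMap.smul_apply, smul_eq_mul]
    rw [h1, hsymm X v, hsymm X n, h4]
    field_simp
    ring
  · intro ω
    simp only [P', l', l2', n', map_add, map_sub, map_smul, LinearMap.add_apply,
      LinearMap.sub_apply, LinearMap.smul_apply, smul_eq_mul]
    rw [h2, h1, hsymm v n, h4]
    field_simp
    linear_combination (-lam * ω v) * c3
  · simp only [l', l2', n', n2', map_add, map_sub, map_smul, LinearMap.add_apply,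
      LinearMap.sub_apply, LinearMap.smul_apply, smul_eq_mul]
    rw [hsymm v n, h4]
    field_simp
    linear_combination c3
  · intro X
    simp only [l', n', n2', map_add, map_sub, map_smul, LinearMap.add_apply,
      LinearMap.sub_apply, LinearMap.smul_apply, smul_eq_mul]
    rw [h4]
    field_simp
    ring
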